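/- For a connected graph G on n ≥ 2 vertices, the resistance spectral radius satisfies ρ_1(G) ≤ max_{i≠j} sqrt( R̄_i R̄_j ), where R̄_i = T_i / R_i is the average resistance degree; equality holds if and only if G is pseudo resistance regular. -/

import Mathlib

open Matrix BigOperators Finset

noncomputable def allOnes (V : Type*) : Matrix V V ℝ := Matrix.of fun _ _ => 1

/-- The resistance distance matrix of a connected graph, via the matrix
`X = (L + (1/n)J)⁻¹`: `r_ij = X_ii + X_jj - 2X_ij`. -/
noncomputable def resistMatrix {V : Type*} [Fintype V] [DecidableEq V]
    (G : SimpleGraph V) [DecidableRel G.Adj] : Matrix V V ℝ :=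
  Matrix.of fun i j =>
    (G.lapMatrix ℝ + (Fintype.card V : ℝ)⁻¹ • allOnes V)⁻¹ i i +
    (G.lapMatrix ℝ + (Fintype.card V : ℝ)⁻¹ • allOnes V)⁻¹ j j -
    2 * (G.lapMatrix ℝ + (Fintype.card V : ℝ)⁻¹ • allOnes V)⁻¹ i j

/-- `W` is the Moore-Penrose inverse of `L`. -/
def IsMoorePenrose {V : Type*} [Fintype V] [DecidableEq V] (L W : Matrix V V ℝ) : Prop :=
  L * W * L = L ∧ W * L * W = W ∧ (L * W)ᵀ = L * W ∧ (W * L)ᵀ = W * L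

/-- Resistance degree `R_i`. -/
noncomputable def rdeg {V : Type*} [Fintype V] [DecidableEq V]
    (G : SimpleGraph V) [DecidableRel G.Adj] (i : V) : ℝ :=
  ∑ j, resistMatrix G i j

/-- Second resistance degree `T_i`. -/
noncomputable def rdeg2 {V : Type*} [Fintype V] [DecidableEq V]
    (G : SimpleGraph V) [DecidableRel G.Adj] (i : V) : ℝ :=
  ∑ j, resistMatrix G i j * rdeg G j

section Aux

lemma rayleigh_upper {N : Type*} [Fintype N] [DecidableEq N] {A : Matrix N N ℝ}
    (hA : A.IsHermitian) {ρ : ℝ} (h : ∀ i, hA.eigenvalues i ≤ ρ) (x : N → ℝ) :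
    x ⬝ᵥ (A *ᵥ x) ≤ ρ * (x ⬝ᵥ x) := by
  set U : Matrix N N ℝ := (hA.eigenvectorUnitary : Matrix N N ℝ) with hU
  have hUU : U * star U = 1 := Matrix.mem_unitaryGroup_iff.mp hA.eigenvectorUnitary.2
  have hstar : star U = Uᵀ := by
    rw [Matrix.star_eq_conjTranspose, Matrix.conjTranspose_eq_transpose_of_trivial]
  set y : N → ℝ := Uᵀ *ᵥ x with hy
  have hxy : x ⬝ᵥ x = y ⬝ᵥ y := by
    rw [hy, mulVec_transpose, dotProduct_comm (x ᵥ* U), ← dotProduct_mulVec,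
      ← mulVec_transpose, mulVec_mulVec, ← hstar, hUU, one_mulVec]
  have hAx : x ⬝ᵥ (A *ᵥ x) = ∑ i, hA.eigenvalues i * (y i * y i) := by
    conv_lhs => rw [hA.spectral_theorem, Unitary.conjStarAlgAut_apply, ← hU]
    rw [hstar, ← mulVec_mulVec, ← mulVec_mulVec, dotProduct_mulVec, ← mulVec_transpose, ← hy]
    simp [Matrix.mulVec_diagonal, dotProduct, mul_comm, mul_assoc, mul_left_comm]
  rw [hAx, hxy, dotProduct, Finset.mul_sum]
  exact Finset.sum_le_sum fun i _ => mul_le_mul_of_nonneg_right (h i) (mul_self_nonneg _)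

variable {n : ℕ} (G : SimpleGraph (Fin n)) [DecidableRel G.Adj]

lemma resist_diag (i : Fin n) : resistMatrix G i i = 0 := by
  simp [resistMatrix]; ring

lemma posDef_LJ (hn : 1 ≤ n) (hG : G.Connected) :
    (G.lapMatrix ℝ + (Fintype.card (Fin n) : ℝ)⁻¹ • allOnes (Fin n)).PosDef := by
  have hcard : (Fintype.card (Fin n) : ℝ) = (n : ℝ) := by simp
  have hnpos : (0:ℝ) < n := by exact_mod_cast hn
  refine Matrix.PosDef.of_dotProduct_mulVec_pos ?_ ?_
  · have h2 : ((Fintype.card (Fin n) : ℝ)⁻¹ • allOnes (Fin n)).IsHermitian := by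
      ext i j
      simp [allOnes, Matrix.conjTranspose_apply]
    exact Matrix.IsHermitian.add (SimpleGraph.posSemidef_lapMatrix ℝ G).1 h2
  · intro x hx
    rw [star_trivial]
    have hsum : x ⬝ᵥ ((G.lapMatrix ℝ + (Fintype.card (Fin n) : ℝ)⁻¹ • allOnes (Fin n)) *ᵥ x)
        = x ⬝ᵥ (G.lapMatrix ℝ *ᵥ x) + (n:ℝ)⁻¹ * ((∑ i, x i) * (∑ i, x i)) := by
      rw [Matrix.add_mulVec, dotProduct_add, Matrix.smul_mulVec,
        dotProduct_smul, hcard]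
      congr 1
      simp only [smul_eq_mul]
      congr 1
      simp [allOnes, Matrix.mulVec, dotProduct, Finset.sum_mul]
    rw [hsum]
    have hL : 0 ≤ x ⬝ᵥ (G.lapMatrix ℝ *ᵥ x) := by
      have := (SimpleGraph.posSemidef_lapMatrix ℝ G).dotProduct_mulVec_nonneg x
      simpa using this
    rcases hL.lt_or_eq with h | h
    · have : 0 ≤ (n:ℝ)⁻¹ * ((∑ i, x i) * (∑ i, x i)) :=
        mul_nonneg (by positivity) (mul_self_nonneg _)
      linarith
    · have hconst : ∀ i j : Fin n, x i = x j := by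
        intro i j
        have h0 : Matrix.toLinearMap₂' ℝ (G.lapMatrix ℝ) x x = 0 := by
          rw [Matrix.toLinearMap₂'_apply']; exact h.symm
        exact (SimpleGraph.lapMatrix_toLinearMap₂'_apply'_eq_zero_iff_forall_reachable
          G x).mp h0 i j (hG.preconnected i j)
      have hne : Nonempty (Fin n) := Fin.pos_iff_nonempty.mp (by omega)
      obtain ⟨i0⟩ := hne
      have hx0 : x i0 ≠ 0 := by
        intro h0
        apply hx
        funext j
        rw [hconst j i0, h0]; rfl
      have hS : (∑ i, x i) = n * x i0 := by
        rw [Finset.sum_congr rfl fun j _ => hconst j i0]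
        simp [mul_comm]
      rw [← h, zero_add, hS]
      have hne0 : (n:ℝ) * x i0 ≠ 0 := mul_ne_zero (by positivity) hx0
      exact mul_pos (inv_pos.mpr hnpos) (mul_self_pos.mpr hne0)

lemma resist_pos (hn : 1 ≤ n) (hG : G.Connected) {i j : Fin n} (hij : i ≠ j) :
    0 < resistMatrix G i j := by
  set M := G.lapMatrix ℝ + (Fintype.card (Fin n) : ℝ)⁻¹ • allOnes (Fin n) with hM
  have hPD : M.PosDef := posDef_LJ G hn hG
  have hX : M⁻¹.PosDef := hPD.inv
  have hsymm : M⁻¹ i j = M⁻¹ j i := by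
    have := hX.1
    calc M⁻¹ i j = M⁻¹ᴴ i j := by rw [this]
    _ = M⁻¹ j i := by simp [Matrix.conjTranspose_apply]
  set v : Fin n → ℝ := Pi.single i 1 - Pi.single j 1 with hv
  have hvne : v ≠ 0 := by
    intro h
    have h1 : v i = 1 := by
      simp [hv, Pi.single_eq_same]
      exact Pi.single_eq_of_ne hij 1
    rw [h] at h1
    exact one_ne_zero h1.symm
  have hdot : v ⬝ᵥ (M⁻¹ *ᵥ v) = resistMatrix G i j := by
    rw [hv]
    simp only [Matrix.mulVec_sub, Matrix.mulVec_single_one, sub_dotProduct,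
      dotProduct_sub, single_dotProduct]
    simp only [Pi.sub_apply, mul_one, one_mul, Matrix.col_apply]
    have hr : resistMatrix G i j = M⁻¹ i i + M⁻¹ j j - 2 * M⁻¹ i j := by
      simp only [resistMatrix, Matrix.of_apply, ← hM]
    rw [hr, ← hsymm]
    ring
  have := hX.dotProduct_mulVec_pos hvne
  rw [star_trivial, hdot] at this
  exact this

lemma resist_nonneg (hn : 1 ≤ n) (hG : G.Connected) (i j : Fin n) :
    0 ≤ resistMatrix G i j := by
  rcases eq_or_ne i j with rfl | h
  · rw [resist_diag]
  · exact (resist_pos G hn hG h).le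

lemma rdeg_pos (hn : 2 ≤ n) (hG : G.Connected) (i : Fin n) : 0 < rdeg G i := by
  have hone : 1 ≤ n := by omega
  obtain ⟨j, hj⟩ := Fintype.exists_ne_of_one_lt_card (by simp; omega) i
  refine Finset.sum_pos' (fun k _ => resist_nonneg G hone hG i k) ⟨j, Finset.mem_univ j, ?_⟩
  exact resist_pos G hone hG (Ne.symm hj)

lemma rdeg2_pos (hn : 2 ≤ n) (hG : G.Connected) (i : Fin n) : 0 < rdeg2 G i := by
  have hone : 1 ≤ n := by omega
  obtain ⟨j, hj⟩ := Fintype.exists_ne_of_one_lt_card (by simp; omega) i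
  refine Finset.sum_pos' (fun k _ => mul_nonneg (resist_nonneg G hone hG i k)
    (rdeg_pos G hn hG k).le) ⟨j, Finset.mem_univ j, ?_⟩
  exact mul_pos (resist_pos G hone hG (Ne.symm hj)) (rdeg_pos G hn hG j)

end Aux

theorem resistance_spectral_radius_upper_bound_avg
    (n : ℕ) (hn : 2 ≤ n) (G : SimpleGraph (Fin n)) [DecidableRel G.Adj]
    (hG : G.Connected) (hR : (resistMatrix G).IsHermitian)
    (ρ : ℝ) (hρ : IsGreatest (Set.range hR.eigenvalues) ρ)
    (m : ℝ) (hm : IsGreatest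
      {x : ℝ | ∃ i j : Fin n, i ≠ j ∧
        x = Real.sqrt ((rdeg2 G i / rdeg G i) * (rdeg2 G j / rdeg G j))} m) :
    ρ ≤ m ∧ (ρ = m ↔ ∀ i j : Fin n, rdeg2 G i / rdeg G i = rdeg2 G j / rdeg G j) := by
  classical
  have hone : 1 ≤ n := by omega
  have hsym : ∀ i j, resistMatrix G i j = resistMatrix G j i := by
    intro i j
    have h1 := congrFun (congrFun hR j) i
    simpa [Matrix.conjTranspose_apply] using h1
  have hdiag : ∀ i, resistMatrix G i i = 0 := resist_diag G
  have hpos : ∀ {i j : Fin n}, i ≠ j → 0 < resistMatrix G i j :=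
    fun h => resist_pos G hone hG h
  have hnn : ∀ i j, 0 ≤ resistMatrix G i j := resist_nonneg G hone hG
  have hrd : ∀ i, 0 < rdeg G i := rdeg_pos G hn hG
  have hrd2 : ∀ i, 0 < rdeg2 G i := rdeg2_pos G hn hG
  have hbar : ∀ i, 0 < rdeg2 G i / rdeg G i := fun i => div_pos (hrd2 i) (hrd i)
  obtain ⟨i0, j0, hij0, hm0eq⟩ := hm.1
  have hmpos : 0 < m := by
    rw [hm0eq]; exact Real.sqrt_pos.mpr (mul_pos (hbar i0) (hbar j0))
  have hray : ∀ x : Fin n → ℝ, x ⬝ᵥ (resistMatrix G *ᵥ x) ≤ ρ * (x ⬝ᵥ x) :=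
    fun x => rayleigh_upper hR (fun i => hρ.2 ⟨i, rfl⟩) x
  -- ρ > 0
  have hρpos : 0 < ρ := by
    set x : Fin n → ℝ := Pi.single i0 1 + Pi.single j0 1 with hx
    have h1 : x ⬝ᵥ (resistMatrix G *ᵥ x) = 2 * resistMatrix G i0 j0 := by
      rw [hx]
      simp only [Matrix.mulVec_add, Matrix.mulVec_single_one, add_dotProduct,
        dotProduct_add, single_dotProduct, Pi.add_apply, mul_one, one_mul, Matrix.col_apply]
      rw [hdiag i0, hdiag j0, hsym j0 i0]
      ring
    have h2 : x ⬝ᵥ x = 2 := by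
      rw [hx]
      simp only [add_dotProduct, single_dotProduct, Pi.add_apply,
        Pi.single_eq_same, one_mul]
      rw [Pi.single_eq_of_ne (Ne.symm hij0), Pi.single_eq_of_ne hij0]
      norm_num
    have h3 := hray x
    rw [h1, h2] at h3
    have := hpos hij0
    linarith
  -- eigenvector for ρ
  obtain ⟨k, hk⟩ := hρ.1
  set u : Fin n → ℝ := ⇑(hR.eigenvectorBasis k) with hu
  have huevec : resistMatrix G *ᵥ u = ρ • u := by
    rw [hu, hR.mulVec_eigenvectorBasis k, hk]
  have hune : u ≠ 0 := by
    intro h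
    exact hR.eigenvectorBasis.orthonormal.ne_zero k (by simpa [hu] using h)
  set w : Fin n → ℝ := fun i => |u i| with hw
  have hwnn : ∀ i, 0 ≤ w i := fun i => abs_nonneg _
  have hkey : ∀ i, ρ * w i ≤ ∑ j, resistMatrix G i j * w j := by
    intro i
    have h1 : ρ * w i = |(resistMatrix G *ᵥ u) i| := by
      rw [huevec]
      simp only [Pi.smul_apply, smul_eq_mul, hw, abs_mul, abs_of_pos hρpos]
    rw [h1]
    have h2 : (resistMatrix G *ᵥ u) i = ∑ j, resistMatrix G i j * u j := rfl
    rw [h2]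
    calc |∑ j, resistMatrix G i j * u j| ≤ ∑ j, |resistMatrix G i j * u j| :=
          Finset.abs_sum_le_sum_abs _ _
      _ = ∑ j, resistMatrix G i j * w j :=
          Finset.sum_congr rfl fun j _ => by rw [abs_mul, abs_of_nonneg (hnn i j)]
  set y : Fin n → ℝ := fun i => w i / rdeg G i with hy
  have hwy : ∀ i, w i = rdeg G i * y i := by
    intro i
    show w i = rdeg G i * (w i / rdeg G i)
    rw [mul_comm, div_mul_cancel₀ _ (ne_of_gt (hrd i))]
  have hynn : ∀ i, 0 ≤ y i := fun i => div_nonneg (hwnn i) (hrd i).le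
  obtain ⟨p, -, hpmax'⟩ := Finset.exists_max_image (univ : Finset (Fin n)) y ⟨i0, mem_univ _⟩
  have hpmax : ∀ j, y j ≤ y p := fun j => hpmax' j (mem_univ j)
  have hne2 : ((univ : Finset (Fin n)).erase p).Nonempty := by
    rw [← Finset.card_pos, Finset.card_erase_of_mem (mem_univ p)]
    simp; omega
  obtain ⟨q, hqmem, hqmax'⟩ := Finset.exists_max_image _ y hne2
  have hpq : q ≠ p := Finset.ne_of_mem_erase hqmem
  have hqmax : ∀ j, j ≠ p → y j ≤ y q := fun j hj =>
    hqmax' j (Finset.mem_erase.mpr ⟨hj, mem_univ j⟩)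
  have hyppos : 0 < y p := by
    obtain ⟨i1, hi1⟩ := Function.ne_iff.mp hune
    have : 0 < y i1 := div_pos (abs_pos.mpr hi1) (hrd i1)
    exact lt_of_lt_of_le this (hpmax i1)
  have hyqpos : 0 < y q := by
    rcases (hynn q).lt_or_eq with h | h
    · exact h
    exfalso
    have hz : ∀ j, j ≠ p → w j = 0 := by
      intro j hj
      have h1 : y j = 0 := le_antisymm (h ▸ hqmax j hj) (hynn j)
      rw [hwy j, h1, mul_zero]
    have hsum : (∑ j, resistMatrix G p j * w j) = 0 := by
      rw [Finset.sum_eq_single p]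
      · rw [hdiag, zero_mul]
      · intro b _ hb; rw [hz b hb, mul_zero]
      · intro hmem; exact absurd (mem_univ p) hmem
    have h4 := hkey p
    rw [hsum] at h4
    have hwppos : 0 < w p := by
      rw [hwy p]; exact mul_pos (hrd p) hyppos
    nlinarith [mul_pos hρpos hwppos]
  -- termwise bound machinery
  have hterm : ∀ (a : Fin n) (z : ℝ), (∀ j, j ≠ a → y j ≤ z) →
      ∀ j, resistMatrix G a j * w j ≤ (resistMatrix G a j * rdeg G j) * z := by
    intro a z hzb j
    rw [hwy j, ← mul_assoc]
    rcases eq_or_ne j a with rfl | hj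
    · rw [hdiag]; simp
    · exact mul_le_mul_of_nonneg_left (hzb j hj) (mul_nonneg (hnn a j) (hrd j).le)
  have hsumz : ∀ (a : Fin n) (z : ℝ),
      (∑ j, (resistMatrix G a j * rdeg G j) * z) = rdeg2 G a * z := by
    intro a z
    rw [← Finset.sum_mul]
    rfl
  have hstep : ∀ (a : Fin n) (z : ℝ), (∀ j, j ≠ a → y j ≤ z) →
      (∑ j, resistMatrix G a j * w j) ≤ rdeg2 G a * z := by
    intro a z hzb
    exact (Finset.sum_le_sum fun j _ => hterm a z hzb j).trans_eq (hsumz a z)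
  have hA : ρ * (rdeg G p * y p) ≤ rdeg2 G p * y q := by
    have h1 := (hkey p).trans (hstep p (y q) hqmax)
    rwa [hwy p] at h1
  have hB : ρ * (rdeg G q * y q) ≤ rdeg2 G q * y p := by
    have h1 := (hkey q).trans (hstep q (y p) (fun j _ => hpmax j))
    rwa [hwy q] at h1
  -- sqrt bound to square bound
  have hsq : ∀ a b : Fin n, a ≠ b →
      (rdeg2 G a / rdeg G a) * (rdeg2 G b / rdeg G b) ≤ m ^ 2 := by
    intro a b hab
    have h1 : Real.sqrt ((rdeg2 G a / rdeg G a) * (rdeg2 G b / rdeg G b)) ≤ m :=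
      hm.2 ⟨a, b, hab, rfl⟩
    have h2 : 0 ≤ (rdeg2 G a / rdeg G a) * (rdeg2 G b / rdeg G b) :=
      (mul_pos (hbar a) (hbar b)).le
    calc (rdeg2 G a / rdeg G a) * (rdeg2 G b / rdeg G b)
        = Real.sqrt ((rdeg2 G a / rdeg G a) * (rdeg2 G b / rdeg G b)) ^ 2 :=
          (Real.sq_sqrt h2).symm
      _ ≤ m ^ 2 := pow_le_pow_left₀ (Real.sqrt_nonneg _) h1 2
  have hkey2 : ρ * ρ ≤ (rdeg2 G p / rdeg G p) * (rdeg2 G q / rdeg G q) := by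
    have hmul : (ρ * (rdeg G p * y p)) * (ρ * (rdeg G q * y q))
        ≤ (rdeg2 G p * y q) * (rdeg2 G q * y p) :=
      mul_le_mul hA hB ((mul_pos hρpos (mul_pos (hrd q) hyqpos)).le) ((mul_pos (hrd2 p) hyqpos).le)
    rw [div_mul_div_comm, le_div_iff₀ (mul_pos (hrd p) (hrd q))]
    have h4 : (ρ * ρ * (rdeg G p * rdeg G q)) * (y p * y q)
        ≤ (rdeg2 G p * rdeg2 G q) * (y p * y q) := by nlinarith [hmul]
    exact le_of_mul_le_mul_right h4 (mul_pos hyppos hyqpos)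
  have part1 : ρ ≤ m := by
    have h5 := hkey2.trans (hsq p q (Ne.symm hpq))
    nlinarith [hρpos, hmpos]
  refine ⟨part1, ?_, ?_⟩
  · -- ρ = m → pseudo resistance regular
    intro hρm
    rcases eq_or_lt_of_le hn with hn2 | hn3
    · -- n = 2
      intro i j
      rcases eq_or_ne i j with rfl | hij
      · rfl
      have key : ∀ a b : Fin n, a ≠ b →
          rdeg G a = resistMatrix G a b ∧ rdeg2 G a = resistMatrix G a b * rdeg G b := by
        intro a b hab
        have huniv : (univ : Finset (Fin n)) = {a, b} := by
          symm
          apply Finset.eq_univ_of_card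
          rw [Finset.card_insert_of_notMem (by simpa using hab), Finset.card_singleton]
          simp [← hn2]
        constructor
        · rw [rdeg, huniv, Finset.sum_pair hab, resist_diag, zero_add]
        · rw [rdeg2, huniv, Finset.sum_pair hab, resist_diag, zero_mul, zero_add]
      obtain ⟨ha1, ha2⟩ := key i j hij
      obtain ⟨hb1, hb2⟩ := key j i hij.symm
      have hsymR : resistMatrix G j i = resistMatrix G i j := hsym j i
      rw [ha1, ha2, hb1, hb2, hsymR]
      rw [mul_div_cancel_left₀ _ (ne_of_gt (hpos hij)),
        mul_div_cancel_left₀ _ (ne_of_gt (hpos hij))]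
      exact ha1.symm
    · -- n ≥ 3
      have hm2 : m ^ 2 = ρ * ρ := by rw [hρm]; ring
      have h6 : rdeg2 G p * rdeg2 G q ≤ (ρ * ρ) * (rdeg G p * rdeg G q) := by
        have h5 := hsq p q (Ne.symm hpq)
        rw [div_mul_div_comm, div_le_iff₀ (mul_pos (hrd p) (hrd q)), hm2] at h5
        linarith
      have h7 := mul_le_mul_of_nonneg_right h6 ((mul_pos hyppos hyqpos).le)
      have hbpos : 0 < ρ * (rdeg G q * y q) := mul_pos hρpos (mul_pos (hrd q) hyqpos)
      have hapos : 0 < ρ * (rdeg G p * y p) := mul_pos hρpos (mul_pos (hrd p) hyppos)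
      have h9 : (rdeg2 G p * y q) * (rdeg2 G q * y p)
          ≤ (ρ * (rdeg G p * y p)) * (ρ * (rdeg G q * y q)) := by nlinarith [h7]
      have h10 : (rdeg2 G p * y q) * (ρ * (rdeg G q * y q))
          ≤ (ρ * (rdeg G p * y p)) * (ρ * (rdeg G q * y q)) :=
        (mul_le_mul_of_nonneg_left hB (mul_nonneg ((hrd2 p).le) hyqpos.le)).trans h9
      have heqA : ρ * (rdeg G p * y p) = rdeg2 G p * y q :=
        le_antisymm hA (le_of_mul_le_mul_right h10 hbpos)
      have h11 : (ρ * (rdeg G p * y p)) * (rdeg2 G q * y p)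
          ≤ (ρ * (rdeg G p * y p)) * (ρ * (rdeg G q * y q)) := by
        calc (ρ * (rdeg G p * y p)) * (rdeg2 G q * y p)
            ≤ (rdeg2 G p * y q) * (rdeg2 G q * y p) :=
              mul_le_mul_of_nonneg_right hA (mul_nonneg ((hrd2 q).le) hyppos.le)
          _ ≤ _ := h9
      have heqB : ρ * (rdeg G q * y q) = rdeg2 G q * y p :=
        le_antisymm hB (le_of_mul_le_mul_left h11 hapos)
      -- termwise equalities
      have hSeqp : (∑ j, resistMatrix G p j * w j)
          = ∑ j, (resistMatrix G p j * rdeg G j) * y q := by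
        apply le_antisymm (Finset.sum_le_sum fun j _ => hterm p (y q) hqmax j)
        rw [hsumz p (y q), ← heqA, ← hwy p]
        exact hkey p
      have hyq_all : ∀ j, j ≠ p → y j = y q := by
        intro j hj
        have h12 := (Finset.sum_eq_sum_iff_of_le
          (fun j _ => hterm p (y q) hqmax j)).mp hSeqp j (mem_univ j)
        rw [hwy j, ← mul_assoc] at h12
        exact mul_left_cancel₀ (ne_of_gt (mul_pos (hpos (Ne.symm hj)) (hrd j))) h12
      have hSeqq : (∑ j, resistMatrix G q j * w j)
          = ∑ j, (resistMatrix G q j * rdeg G j) * y p := by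
        apply le_antisymm (Finset.sum_le_sum fun j _ => hterm q (y p) (fun j _ => hpmax j) j)
        rw [hsumz q (y p), ← heqB, ← hwy q]
        exact hkey q
      have hyp_all : ∀ j, j ≠ q → y j = y p := by
        intro j hj
        have h12 := (Finset.sum_eq_sum_iff_of_le
          (fun j _ => hterm q (y p) (fun j _ => hpmax j) j)).mp hSeqq j (mem_univ j)
        rw [hwy j, ← mul_assoc] at h12
        exact mul_left_cancel₀ (ne_of_gt (mul_pos (hpos (Ne.symm hj)) (hrd j))) h12
      have hthird : ∃ k : Fin n, k ≠ p ∧ k ≠ q := by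
        by_contra hcon
        push_neg at hcon
        have hsub : (univ : Finset (Fin n)) ⊆ {p, q} := by
          intro k _
          rcases eq_or_ne k p with rfl | hk
          · simp
          · rw [hcon k hk]; simp
        have hcard := Finset.card_le_card hsub
        have : ({p, q} : Finset (Fin n)).card ≤ 2 :=
          (Finset.card_insert_le _ _).trans (by simp)
        simp [Finset.card_univ] at hcard
        omega
      obtain ⟨t, htp, htq⟩ := hthird
      have hypq : y p = y q := by rw [← hyp_all t htq, hyq_all t htp]
      have hyconst : ∀ j, y j = y q := by
        intro j
        rcases eq_or_ne j p with rfl | hj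
        · exact hypq
        · exact hyq_all j hj
      have hlower : ∀ i, m ≤ rdeg2 G i / rdeg G i := by
        intro i
        have h1 := (hkey i).trans (hstep i (y q) (fun j _ => (hyconst j).le))
        rw [hwy i, hyconst i] at h1
        rw [le_div_iff₀ (hrd i), ← hρm]
        have h2 : (ρ * rdeg G i) * y q ≤ rdeg2 G i * y q := by linarith [h1]
        exact le_of_mul_le_mul_right h2 hyqpos
      intro i j
      have hfin : ∀ a : Fin n, rdeg2 G a / rdeg G a = m := by
        intro a
        obtain ⟨b, hb⟩ := Fintype.exists_ne_of_one_lt_card (by simp; omega) a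
        have h1 := hsq a b (Ne.symm hb)
        have h2 := hlower a
        have h3 := hlower b
        apply le_antisymm ?_ h2
        nlinarith [hmpos]
      rw [hfin i, hfin j]
  · -- pseudo resistance regular → ρ = m
    intro hall
    have hmc : m = rdeg2 G i0 / rdeg G i0 := by
      rw [hm0eq, hall j0 i0, Real.sqrt_mul_self (hbar i0).le]
    apply le_antisymm part1
    rw [hmc]
    have hRv : resistMatrix G *ᵥ rdeg G = fun i => rdeg2 G i := by
      funext i
      rfl
    have hc : ∀ i, rdeg2 G i = (rdeg2 G i0 / rdeg G i0) * rdeg G i := by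
      intro i
      rw [← hall i i0, div_mul_cancel₀ _ (ne_of_gt (hrd i))]
    have h1 : (rdeg G) ⬝ᵥ (resistMatrix G *ᵥ rdeg G)
        = (rdeg2 G i0 / rdeg G i0) * ((rdeg G) ⬝ᵥ (rdeg G)) := by
      rw [hRv, dotProduct, dotProduct, Finset.mul_sum]
      apply Finset.sum_congr rfl
      intro i _
      rw [hc i]
      ring
    have hdd : 0 < (rdeg G) ⬝ᵥ (rdeg G) :=
      Finset.sum_pos (fun i _ => mul_pos (hrd i) (hrd i)) ⟨i0, mem_univ _⟩
    have h2 := hray (rdeg G)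
    rw [h1] at h2
    exact le_of_mul_le_mul_right h2 hdd
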